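/- Let B be a complex Banach space, ρ > 0, κ ≥ 1 an integer, and γ₁, …, γ_M distinct complex numbers of modulus 1. Let S₁, …, S_M, N₁, …, N_M and R be bounded linear operators on B satisfying, for all i, j: SᵢSⱼ = δᵢⱼ Sᵢ; SᵢNⱼ = NⱼSᵢ = δᵢⱼ Nⱼ; NᵢNⱼ = δᵢⱼ Nᵢ²; Nᵢ^κ = 0; SᵢR = RSᵢ = NᵢR = RNᵢ = 0; and assume the spectral radius of R is strictly less than ρ. Set L := Σ_{i=1}^M (γᵢ ρ Sᵢ + Nᵢ) + R. Then for every γ ∈ ℂ with |γ| = 1, the sequence of operators n^{-κ} Σ_{k=0}^{n−1} γ^{-k} ρ^{-k} L^k converges in operator norm as n → ∞; the limit is 0 if γ ∉ {γ₁, …, γ_M}, while if γ = γᵢ the limit equals (1/κ!) (γᵢ ρ)^{1−κ} Nᵢ^{κ−1}, where for κ = 1 the operator Nᵢ^{κ−1} = Nᵢ⁰ is interpreted as the projection Sᵢ. -/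

import Mathlib

open Filter Finset Topology


lemma sum_choose_succ_rec (z : ℂ) (m n : ℕ) :
    ∑ k ∈ range (n+1), ((k.choose (m+1) : ℂ)) * z ^ k
    = z * ∑ k ∈ range n, (k.choose m : ℂ) * z ^ k
      + z * ∑ k ∈ range n, (k.choose (m+1) : ℂ) * z ^ k := by
  rw [Finset.sum_range_succ']
  simp only [Nat.choose_succ_succ, Nat.cast_add, add_mul, Finset.sum_add_distrib,
    Nat.choose_zero_right, pow_zero, Finset.mul_sum]
  have h0 : ((Nat.choose 0 (m+1) : ℂ)) * 1 = 0 := by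
    simp [Nat.choose_eq_zero_of_lt (Nat.succ_pos m)]
  rw [h0, add_zero]
  congr 1 <;> exact Finset.sum_congr rfl fun k _ => by ring

lemma sum_choose_bound (z : ℂ) (hz : ‖z‖ ≤ 1) (hz1 : z ≠ 1) (m : ℕ) :
    ∃ C : ℝ, 0 ≤ C ∧ ∀ n : ℕ, ‖∑ k ∈ range n, (k.choose m : ℂ) * z ^ k‖ ≤ C * (n + 1) ^ m := by
  have h1z : (1 : ℂ) - z ≠ 0 := sub_ne_zero.2 (Ne.symm hz1)
  have h1zpos : 0 < ‖(1:ℂ) - z‖ := norm_pos_iff.2 h1z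
  induction m with
  | zero =>
    refine ⟨2 / ‖(1:ℂ) - z‖, by positivity, fun n => ?_⟩
    simp only [Nat.choose_zero_right, Nat.cast_one, one_mul, pow_zero, mul_one]
    rw [geom_sum_eq (by simpa using hz1) n, norm_div, norm_sub_rev (1:ℂ) z]
    gcongr
    calc ‖z ^ n - 1‖ ≤ ‖z ^ n‖ + ‖(1:ℂ)‖ := norm_sub_le _ _
      _ ≤ 1 + 1 := by
          rw [norm_pow, norm_one]
          exact add_le_add (pow_le_one₀ (norm_nonneg _) hz) le_rfl
      _ = 2 := by norm_num
  | succ m ih =>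
    obtain ⟨C, hC0, hC⟩ := ih
    refine ⟨(C + 1) / ‖(1:ℂ) - z‖, by positivity, fun n => ?_⟩
    have key : (1 - z) * ∑ k ∈ range n, (k.choose (m+1) : ℂ) * z ^ k
        = z * ∑ k ∈ range n, (k.choose m : ℂ) * z ^ k - (n.choose (m+1) : ℂ) * z ^ n := by
      have h1 := sum_choose_succ_rec z m n
      rw [Finset.sum_range_succ] at h1
      linear_combination h1
    have h2 : ‖∑ k ∈ range n, (k.choose (m+1) : ℂ) * z ^ k‖ * ‖(1:ℂ) - z‖
        = ‖z * ∑ k ∈ range n, (k.choose m : ℂ) * z ^ k - (n.choose (m+1) : ℂ) * z ^ n‖ := by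
      rw [← norm_mul, mul_comm, key]
    rw [div_mul_eq_mul_div, le_div_iff₀ h1zpos, h2]
    have hb1 : ‖z * ∑ k ∈ range n, (k.choose m : ℂ) * z ^ k‖ ≤ C * (n+1)^m := by
      rw [norm_mul]
      calc ‖z‖ * ‖∑ k ∈ range n, (k.choose m : ℂ) * z ^ k‖
          ≤ 1 * (C * (n+1)^m) := mul_le_mul hz (hC n) (norm_nonneg _) zero_le_one
        _ = C * (n+1)^m := one_mul _
    have hb2 : ‖(n.choose (m+1) : ℂ) * z ^ n‖ ≤ ((n:ℝ)+1)^(m+1) := by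
      rw [norm_mul, norm_pow]
      calc ‖(n.choose (m+1) : ℂ)‖ * ‖z‖ ^ n ≤ ‖(n.choose (m+1) : ℂ)‖ * 1 :=
            mul_le_mul_of_nonneg_left (pow_le_one₀ (norm_nonneg _) hz) (norm_nonneg _)
        _ = (n.choose (m+1) : ℝ) := by simp [Complex.norm_natCast]
        _ ≤ ((n:ℝ)+1)^(m+1) := by
            have : n.choose (m+1) ≤ (n+1)^(m+1) :=
              (Nat.choose_le_descFactorial n (m+1)).trans
                ((Nat.descFactorial_le_pow n (m+1)).trans (Nat.pow_le_pow_left (Nat.le_succ n) _))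
            exact_mod_cast this
    have h1 : (1:ℝ) ≤ (n:ℝ)+1 := by have := Nat.cast_nonneg (α:=ℝ) n; linarith
    have hmono : ((n:ℝ)+1)^m ≤ ((n:ℝ)+1)^(m+1) := pow_le_pow_right₀ h1 (Nat.le_succ m)
    calc ‖z * ∑ k ∈ range n, (k.choose m : ℂ) * z ^ k - (n.choose (m+1) : ℂ) * z ^ n‖
        ≤ C * (n+1)^m + ((n:ℝ)+1)^(m+1) := (norm_sub_le _ _).trans (add_le_add hb1 hb2)
      _ ≤ (C + 1) * ((n:ℝ)+1)^(m+1) := by nlinarith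

lemma hockey (m : ℕ) : ∀ n : ℕ, (∑ k ∈ range n, k.choose m) = n.choose (m+1) := by
  intro n
  induction n with
  | zero => simp
  | succ n ih => rw [Finset.sum_range_succ, ih, Nat.choose_succ_succ, Nat.add_comm]

lemma inv_natCast_tendsto : Tendsto (fun n : ℕ => (n:ℝ)⁻¹) atTop (𝓝 0) :=
  tendsto_inv_atTop_zero.comp tendsto_natCast_atTop_atTop

lemma ratio_pow_tendsto (m : ℕ) :
    Tendsto (fun n : ℕ => (((n:ℝ)+1)/(n:ℝ))^m) atTop (𝓝 1) := by
  have h : Tendsto (fun n : ℕ => ((n:ℝ)+1)/(n:ℝ)) atTop (𝓝 1) := by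
    have h2 : Tendsto (fun n : ℕ => 1 + (n:ℝ)⁻¹) atTop (𝓝 (1 + 0)) :=
      Tendsto.add (tendsto_const_nhds : Tendsto (fun _ : ℕ => (1:ℝ)) atTop (𝓝 1))
        inv_natCast_tendsto
    rw [add_zero] at h2
    refine h2.congr' ?_
    filter_upwards [eventually_ge_atTop 1] with n hn
    have : (n:ℝ) ≠ 0 := Nat.cast_ne_zero.2 (by omega)
    field_simp
  have h3 := h.pow m
  rwa [one_pow] at h3

lemma natCast_zpow_tendsto_zero (a : ℤ) (ha : a < 0) :
    Tendsto (fun n : ℕ => (n:ℂ)^a) atTop (𝓝 0) := by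
  have hr : Tendsto (fun n : ℕ => (n:ℝ)^a) atTop (𝓝 0) :=
    (tendsto_zpow_atTop_zero ha).comp tendsto_natCast_atTop_atTop
  rw [tendsto_zero_iff_norm_tendsto_zero]
  refine hr.congr fun n => ?_
  rw [norm_zpow, Complex.norm_natCast]

lemma choose_div_tendsto (j : ℕ) :
    Tendsto (fun n : ℕ => (n.choose j : ℂ) * ((n:ℂ)^j)⁻¹) atTop (𝓝 ((j.factorial : ℂ)⁻¹)) := by
  have hprod : Tendsto (fun n : ℕ => (j.factorial : ℂ)⁻¹ * ∏ i ∈ range j, (1 - (i:ℂ)/(n:ℂ)))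
      atTop (𝓝 ((j.factorial : ℂ)⁻¹)) := by
    have h2 : Tendsto (fun n : ℕ => ∏ i ∈ range j, (1 - (i:ℂ)/(n:ℂ))) atTop (𝓝 1) := by
      have h1 : (1:ℂ) = ∏ i ∈ range j, (1:ℂ) := by simp
      rw [h1]
      refine tendsto_finset_prod _ fun i _ => ?_
      have h3 : Tendsto (fun n : ℕ => (i:ℂ)/(n:ℂ)) atTop (𝓝 0) := by
        rw [tendsto_zero_iff_norm_tendsto_zero]
        have h4 : Tendsto (fun n : ℕ => (i:ℝ)/(n:ℝ)) atTop (𝓝 0) :=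
          tendsto_const_nhds.div_atTop tendsto_natCast_atTop_atTop
        refine h4.congr fun n => ?_
        rw [norm_div, Complex.norm_natCast, Complex.norm_natCast]
      simpa using tendsto_const_nhds.sub h3
    simpa using tendsto_const_nhds.mul h2
  refine Tendsto.congr' ?_ hprod
  filter_upwards [eventually_ge_atTop (max j 1)] with n hn
  have hnj : j ≤ n := le_trans (le_max_left _ _) hn
  have hn0 : (n:ℂ) ≠ 0 := Nat.cast_ne_zero.2 (by omega)
  have hdesc : (n.descFactorial j : ℂ) = ∏ i ∈ range j, ((n:ℂ) - (i:ℂ)) := by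
    rw [Nat.descFactorial_eq_prod_range, Nat.cast_prod]
    refine Finset.prod_congr rfl fun i hi => ?_
    exact_mod_cast Nat.cast_sub (le_trans (le_of_lt (mem_range.1 hi)) hnj)
  have hfac : (j.factorial : ℂ) * (n.choose j : ℂ) = (n.descFactorial j : ℂ) := by
    exact_mod_cast congrArg (Nat.cast (R := ℂ)) (Nat.descFactorial_eq_factorial_mul_choose n j).symm
  have hfac0 : (j.factorial : ℂ) ≠ 0 := Nat.cast_ne_zero.2 (Nat.factorial_ne_zero j)
  have hchoose : (n.choose j : ℂ) = (j.factorial : ℂ)⁻¹ * ∏ i ∈ range j, ((n:ℂ) - (i:ℂ)) := by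
    rw [← hdesc, ← hfac]; field_simp
  have hq : ∏ i ∈ range j, (1 - (i:ℂ)/(n:ℂ)) = (∏ i ∈ range j, ((n:ℂ) - (i:ℂ))) / (n:ℂ)^j := by
    calc ∏ i ∈ range j, (1 - (i:ℂ)/(n:ℂ)) = ∏ i ∈ range j, (((n:ℂ) - (i:ℂ))/(n:ℂ)) := by
          refine Finset.prod_congr rfl fun i _ => ?_
          field_simp
      _ = (∏ i ∈ range j, ((n:ℂ) - (i:ℂ))) / ∏ _i ∈ range j, (n:ℂ) := Finset.prod_div_distrib _ _
      _ = _ := by rw [Finset.prod_const, card_range]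
  rw [hq, hchoose]
  ring

lemma pascal_scalar (a : ℂ) (k m : ℕ) :
    (k.choose m : ℂ) * a ^ (k - m) * a
      + (if m = 0 then (0:ℂ) else (k.choose (m-1) : ℂ) * a ^ (k - (m-1)))
    = ((k+1).choose m : ℂ) * a ^ (k + 1 - m) := by
  cases m with
  | zero =>
    simp only [Nat.sub_zero, Nat.choose_zero_right, Nat.cast_one, one_mul, ← pow_succ]
    simp
  | succ m =>
    simp only [if_neg (Nat.succ_ne_zero m), Nat.add_sub_cancel]
    rw [Nat.choose_succ_succ k m, Nat.cast_add]
    by_cases h : m + 1 ≤ k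
    · have h1 : k - (m+1) + 1 = k - m := by omega
      have h2 : k + 1 - (m+1) = k - m := by omega
      rw [h2, mul_assoc, ← pow_succ, h1, add_mul]
      ring
    · have h3 : k.choose (m+1) = 0 := Nat.choose_eq_zero_of_lt (by omega)
      have h4 : k + 1 - (m+1) = k - m := by omega
      rw [h3, h4]
      push_cast
      ring

lemma sum_choose_mul_zpow_tendsto (z : ℂ) (hz : ‖z‖ = 1) (m κ : ℕ) (hm : m < κ) :
    Tendsto (fun n : ℕ => (n:ℂ)^(-(κ:ℤ)) * ∑ k ∈ range n, (k.choose m : ℂ) * z ^ k) atTop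
      (𝓝 (if z = 1 ∧ m + 1 = κ then (κ.factorial : ℂ)⁻¹ else 0)) := by
  by_cases hz1 : z = 1
  · subst hz1
    have hsum : ∀ n : ℕ, ∑ k ∈ range n, (k.choose m : ℂ) * (1:ℂ) ^ k = (n.choose (m+1) : ℂ) := by
      intro n
      simp only [one_pow, mul_one]
      rw [← Nat.cast_sum]
      exact_mod_cast congrArg (Nat.cast (R := ℂ)) (hockey m n)
    by_cases hmκ : m + 1 = κ
    · subst hmκ
      simp only [if_pos (⟨rfl, rfl⟩ : (1:ℂ) = 1 ∧ m + 1 = m + 1)]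
      have h := choose_div_tendsto (m+1)
      refine h.congr fun n => ?_
      rw [hsum n, zpow_neg, zpow_natCast, mul_comm]
    · rw [if_neg (by tauto)]
      have hlt : ((m:ℤ)+1) - (κ:ℤ) < 0 := by omega
      have h := (choose_div_tendsto (m+1)).mul (natCast_zpow_tendsto_zero _ hlt)
      rw [mul_zero] at h
      refine h.congr' ?_
      filter_upwards [eventually_ge_atTop 1] with n hn
      have hn0 : (n:ℂ) ≠ 0 := Nat.cast_ne_zero.2 (by omega)
      rw [hsum n, mul_comm]
      have hcast : ((m:ℤ)+1) = ((m+1:ℕ):ℤ) := by push_cast; ring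
      rw [hcast, zpow_sub₀ hn0, zpow_neg, zpow_natCast, zpow_natCast]
      field_simp
  · rw [if_neg (by tauto)]
    obtain ⟨C, hC0, hC⟩ := sum_choose_bound z hz.le hz1 m
    have hg : Tendsto (fun n : ℕ => C * ((((n:ℝ)+1)/(n:ℝ))^m * (n:ℝ)^((m:ℤ) - (κ:ℤ)))) atTop
        (𝓝 0) := by
      have h1 : Tendsto (fun n : ℕ => (n:ℝ)^((m:ℤ) - (κ:ℤ))) atTop (𝓝 0) :=
        (tendsto_zpow_atTop_zero (by omega)).comp tendsto_natCast_atTop_atTop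
      have h2 := (ratio_pow_tendsto m).mul h1
      rw [one_mul] at h2
      have h3 := h2.const_mul C
      rwa [mul_zero] at h3
    refine squeeze_zero_norm' ?_ hg
    filter_upwards [eventually_ge_atTop 1] with n hn
    have hn0 : (n:ℝ) ≠ 0 := Nat.cast_ne_zero.2 (by omega)
    have hnpos : (0:ℝ) < n := by positivity
    rw [norm_mul, norm_zpow, Complex.norm_natCast]
    have heq : C * ((((n:ℝ)+1)/(n:ℝ))^m * (n:ℝ)^((m:ℤ) - (κ:ℤ)))
        = (n:ℝ)^(-(κ:ℤ)) * (C * ((n:ℝ)+1)^m) := by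
      rw [zpow_sub₀ hn0, div_pow, zpow_natCast, zpow_neg, zpow_natCast]
      field_simp
    rw [heq]
    have hnk : (0:ℝ) < (n:ℝ)^(-(κ:ℤ)) := zpow_pos hnpos _
    exact mul_le_mul_of_nonneg_left (hC n) hnk.le

lemma expand_pow {A : Type*} [Ring A] [Algebra ℂ A] {M : ℕ} (a : Fin M → ℂ)
    (S N : Fin M → A) (R : A) (κ : ℕ) (hκ : 1 ≤ κ)
    (hSS : ∀ i j, S i * S j = if i = j then S i else 0)
    (hSN : ∀ i j, S i * N j = if i = j then N j else 0)
    (hNS : ∀ i j, N j * S i = if i = j then N j else 0)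
    (hNN : ∀ i j, N i * N j = if i = j then N i ^ 2 else 0)
    (hNκ : ∀ i, N i ^ κ = 0)
    (hSR : ∀ i, S i * R = 0) (hRS : ∀ i, R * S i = 0)
    (hNR : ∀ i, N i * R = 0) (hRN : ∀ i, R * N i = 0)
    (L : A) (hL : L = (∑ i, (a i • S i + N i)) + R) :
    ∀ k, 1 ≤ k → L ^ k =
      (∑ i, ∑ m ∈ Finset.range κ, ((k.choose m : ℂ) * a i ^ (k - m)) •
        (if m = 0 then S i else N i ^ m)) + R ^ k := by
  set P : Fin M → ℕ → A := fun i m => if m = 0 then S i else N i ^ m with hPdef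
  have hP0 : ∀ i, P i 0 = S i := fun i => by simp [hPdef]
  have hP1 : ∀ i m, P i (m+1) = N i ^ (m+1) := fun i m => by simp [hPdef]
  have hPκ : ∀ i, P i κ = 0 := by
    intro i
    obtain ⟨κ', rfl⟩ : ∃ κ', κ = κ' + 1 := ⟨κ-1, by omega⟩
    rw [hP1, hNκ]
  have hPS : ∀ i j m, P i m * S j = if i = j then P i m else 0 := by
    intro i j m
    cases m with
    | zero =>
      rw [hP0, hSS i j]
    | succ m =>
      rw [hP1, pow_succ, mul_assoc, hNS j i]
      by_cases h : i = j
      · subst h; rw [if_pos rfl, if_pos rfl, ← pow_succ]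
      · rw [if_neg (fun hh => h hh.symm), if_neg h, mul_zero]
  have hPN : ∀ i j m, P i m * N j = if i = j then P i (m+1) else 0 := by
    intro i j m
    cases m with
    | zero =>
      rw [hP0, hSN i j]
      by_cases h : i = j
      · subst h; rw [if_pos rfl, if_pos rfl, hP1, pow_one]
      · simp [h]
    | succ m =>
      rw [hP1, pow_succ, mul_assoc, hNN i j]
      by_cases h : i = j
      · subst h
        rw [if_pos rfl, if_pos rfl, hP1]
        rw [pow_two, ← mul_assoc, ← pow_succ, ← pow_succ]
      · rw [if_neg h, if_neg h, mul_zero]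
  have hPR : ∀ i m, P i m * R = 0 := by
    intro i m
    cases m with
    | zero => rw [hP0, hSR]
    | succ m => rw [hP1, pow_succ, mul_assoc, hNR, mul_zero]
  have hPmul : ∀ i m, P i m * L = a i • P i m + P i (m+1) := by
    intro i m
    rw [hL, mul_add, hPR, add_zero, Finset.mul_sum]
    have hterm : ∀ j, P i m * (a j • S j + N j)
        = if i = j then (a i • P i m + P i (m+1)) else 0 := by
      intro j
      rw [mul_add, mul_smul_comm, hPS i j, hPN i j]
      by_cases h : i = j
      · subst h; simp
      · simp [h]
    rw [Finset.sum_congr rfl fun j _ => hterm j, Finset.sum_ite_eq]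
    simp
  have hRL : ∀ k : ℕ, R ^ (k+1) * L = R ^ (k+2) := by
    intro k
    rw [hL, mul_add, Finset.mul_sum]
    have hterm : ∀ j, R ^ (k+1) * (a j • S j + N j) = 0 := by
      intro j
      rw [mul_add, mul_smul_comm, pow_succ, mul_assoc, hRS, mul_zero, smul_zero,
        mul_assoc, hRN, mul_zero, add_zero]
    rw [Finset.sum_congr rfl fun j _ => hterm j, Finset.sum_const, smul_zero, zero_add,
      ← pow_succ]
  intro k hk
  induction k with
  | zero => omega
  | succ k ih =>
    by_cases hk0 : k = 0
    · subst hk0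
      -- base case : L ^ 1
      rw [pow_one, hL]
      simp only [Nat.zero_add, pow_one]
      congr 1
      refine Finset.sum_congr rfl fun i _ => ?_
      have hval : ∀ m ∈ Finset.range κ,
          ((Nat.choose 1 m : ℂ) * a i ^ (1 - m)) • P i m
          = if m = 0 then a i • S i else (if m = 1 then N i else 0) := by
        intro m _
        match m with
        | 0 => simp [hPdef]
        | 1 => simp [hPdef]
        | (m+2) => simp [hPdef, Nat.choose_eq_zero_of_lt (by omega : 1 < m + 2)]
      rw [Finset.sum_congr rfl hval]
      by_cases hκ1 : κ = 1
      · subst hκ1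
        have hN0 : N i = 0 := by
          have := hNκ i; rwa [pow_one] at this
        simp [hN0]
      · have h2 : 2 ≤ κ := by omega
        rw [← Finset.sum_subset (Finset.range_subset_range.2 h2)
          (fun m _ hm => by
            have : 2 ≤ m := by simpa using (Nat.le_of_not_lt (by simpa using hm))
            rw [if_neg (by omega), if_neg (by omega)])]
        rw [Finset.sum_range_succ, Finset.sum_range_one]
        simp
    · have hk1 : 1 ≤ k := by omega
      have IH := ih hk1
      rw [pow_succ, IH, add_mul]
      obtain ⟨k', rfl⟩ : ∃ k', k = k' + 1 := ⟨k-1, by omega⟩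
      rw [hRL k']
      congr 1
      rw [Finset.sum_mul]
      refine Finset.sum_congr rfl fun i _ => ?_
      rw [Finset.sum_mul]
      have hterm : ∀ m, (((k'+1).choose m : ℂ) * a i ^ (k'+1 - m)) • P i m * L
          = (((k'+1).choose m : ℂ) * a i ^ (k'+1 - m) * a i) • P i m
            + (((k'+1).choose m : ℂ) * a i ^ (k'+1 - m)) • P i (m+1) := by
        intro m
        rw [smul_mul_assoc, hPmul i m, smul_add, smul_smul]
      rw [Finset.sum_congr rfl fun m _ => hterm m, Finset.sum_add_distrib]
      -- shift the second sum
      have hshift : ∑ m ∈ Finset.range κ,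
          (((k'+1).choose m : ℂ) * a i ^ (k'+1 - m)) • P i (m+1)
          = ∑ m ∈ Finset.range (κ+1),
            (if m = 0 then (0:ℂ) else ((k'+1).choose (m-1) : ℂ) * a i ^ (k'+1 - (m-1))) • P i m := by
        rw [Finset.sum_range_succ']
        simp [Nat.add_sub_cancel]
      rw [hshift]
      -- extend the first sum
      have hext : ∑ m ∈ Finset.range κ,
          (((k'+1).choose m : ℂ) * a i ^ (k'+1 - m) * a i) • P i m
          = ∑ m ∈ Finset.range (κ+1),
            (((k'+1).choose m : ℂ) * a i ^ (k'+1 - m) * a i) • P i m := by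
        rw [Finset.sum_range_succ, hPκ, smul_zero, add_zero]
      rw [hext, ← Finset.sum_add_distrib]
      have hcomb : ∀ m, (((k'+1).choose m : ℂ) * a i ^ (k'+1 - m) * a i) • P i m
          + (if m = 0 then (0:ℂ) else ((k'+1).choose (m-1) : ℂ) * a i ^ (k'+1 - (m-1))) • P i m
          = (((k'+2).choose m : ℂ) * a i ^ (k'+2 - m)) • P i m := by
        intro m
        rw [← add_smul, pascal_scalar]
      rw [Finset.sum_congr rfl fun m _ => hcomb m, Finset.sum_range_succ, hPκ, smul_zero,
        add_zero]

/-- For an operator `L = Σᵢ (γᵢ ρ Sᵢ + Nᵢ) + R` with the indicated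
quasi-compact spectral decomposition (eigenvalues `γᵢ ρ` of modulus `ρ`, nilpotent parts
`Nᵢ` with `Nᵢ^κ = 0`, remainder `R` of spectral radius `< ρ`), the Cesàro-type averages
`n^{-κ} Σ_{k<n} γ^{-k} ρ^{-k} L^k` converge in operator norm: to `0` when `γ` is not one
of the `γᵢ`, and to `(1/κ!) (γᵢ ρ)^{1−κ} Nᵢ^{κ−1}` when `γ = γᵢ` (with `Nᵢ⁰`
interpreted as `Sᵢ` when `κ = 1`). -/
theorem stmt7 {B : Type*} [NormedAddCommGroup B] [NormedSpace ℂ B] [CompleteSpace B]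
    (ρ : ℝ) (hρ : 0 < ρ) (κ : ℕ) (hκ : 1 ≤ κ)
    {M : ℕ} (γ : Fin M → ℂ) (hγ : ∀ i, ‖γ i‖ = 1) (hinj : Function.Injective γ)
    (S N : Fin M → (B →L[ℂ] B)) (R : B →L[ℂ] B)
    (hSS : ∀ i j, S i * S j = if i = j then S i else 0)
    (hSN : ∀ i j, S i * N j = if i = j then N j else 0)
    (hNS : ∀ i j, N j * S i = if i = j then N j else 0)
    (hNN : ∀ i j, N i * N j = if i = j then N i ^ 2 else 0)
    (hNκ : ∀ i, N i ^ κ = 0)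
    (hSR : ∀ i, S i * R = 0) (hRS : ∀ i, R * S i = 0)
    (hNR : ∀ i, N i * R = 0) (hRN : ∀ i, R * N i = 0)
    (hspec : spectralRadius ℂ R < ENNReal.ofReal ρ)
    (L : B →L[ℂ] B)
    (hL : L = (∑ i, ((γ i * (ρ : ℂ)) • S i + N i)) + R) :
    ∀ γ₀ : ℂ, ‖γ₀‖ = 1 →
      ((∀ i, γ₀ ≠ γ i) →
        Filter.Tendsto
          (fun nn : ℕ => (nn : ℂ) ^ (-(κ : ℤ)) •
            ∑ k ∈ Finset.range nn, (γ₀ ^ (-(k : ℤ)) * (ρ : ℂ) ^ (-(k : ℤ))) • L ^ k)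
          Filter.atTop (nhds 0)) ∧
      (∀ i, γ₀ = γ i →
        Filter.Tendsto
          (fun nn : ℕ => (nn : ℂ) ^ (-(κ : ℤ)) •
            ∑ k ∈ Finset.range nn, (γ₀ ^ (-(k : ℤ)) * (ρ : ℂ) ^ (-(k : ℤ))) • L ^ k)
          Filter.atTop
          (nhds ((κ.factorial : ℂ)⁻¹ •
            ((γ i * (ρ : ℂ)) ^ ((1 : ℤ) - (κ : ℤ)) •
              (if κ = 1 then S i else N i ^ (κ - 1)))))) := by
  intro γ₀ hγ₀
  have hγ₀0 : γ₀ ≠ 0 := by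
    intro h; rw [h, norm_zero] at hγ₀; norm_num at hγ₀
  have hγi0 : ∀ i, γ i ≠ 0 := by
    intro i h
    have := hγ i
    rw [h, norm_zero] at this; norm_num at this
  have hρ0 : (ρ:ℂ) ≠ 0 := by exact_mod_cast hρ.ne'
  have hmain : Tendsto (fun nn : ℕ => (nn : ℂ) ^ (-(κ : ℤ)) •
        ∑ k ∈ Finset.range nn, (γ₀ ^ (-(k : ℤ)) * (ρ : ℂ) ^ (-(k : ℤ))) • L ^ k)
      atTop
      (𝓝 (∑ i, ∑ m ∈ Finset.range κ,
        (if γ₀ = γ i ∧ m + 1 = κ then (κ.factorial : ℂ)⁻¹ else 0) •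
          ((((γ i * ρ) : ℂ)⁻¹) ^ m • (if m = 0 then S i else N i ^ m)))) := by
    have hexp := expand_pow (fun i => γ i * (ρ:ℂ)) S N R κ hκ hSS hSN hNS hNN hNκ hSR hRS hNR hRN L hL
    have hns : ∀ (c : ℂ) (T : B →L[ℂ] B), ‖c • T‖ = ‖c‖ * ‖T‖ := fun c T => norm_smul c T
    -- the expansion of the scaled powers
    set g : ℕ → (B →L[ℂ] B) := fun k =>
      (∑ i, ∑ m ∈ Finset.range κ,
        ((k.choose m : ℂ) * (γ i / γ₀) ^ k * (((γ i * ρ) : ℂ)⁻¹) ^ m) •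
          (if m = 0 then S i else N i ^ m))
      + ((γ₀⁻¹ * (ρ:ℂ)⁻¹) ^ k) • R ^ k with hgdef
    have hw : ∀ k : ℕ, γ₀ ^ (-(k:ℤ)) * (ρ:ℂ) ^ (-(k:ℤ)) = (γ₀⁻¹ * (ρ:ℂ)⁻¹) ^ k := by
      intro k
      rw [zpow_neg, zpow_neg, zpow_natCast, zpow_natCast, mul_pow, inv_pow, inv_pow]
    have hco : ∀ (i : Fin M) (k m : ℕ),
        (γ₀⁻¹ * (ρ:ℂ)⁻¹) ^ k * ((k.choose m : ℂ) * (γ i * (ρ:ℂ)) ^ (k - m))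
        = (k.choose m : ℂ) * (γ i / γ₀) ^ k * (((γ i * ρ) : ℂ)⁻¹) ^ m := by
      intro i k m
      by_cases hmk : m ≤ k
      · have ha : (γ i * (ρ:ℂ)) ≠ 0 := mul_ne_zero (hγi0 i) hρ0
        have h1 : (γ₀⁻¹ * (ρ:ℂ)⁻¹) ^ k * (γ i * (ρ:ℂ)) ^ k = (γ i / γ₀) ^ k := by
          rw [← mul_pow]
          congr 1
          field_simp
        rw [pow_sub₀ _ ha hmk, ← inv_pow, ← h1]
        ring
      · rw [Nat.choose_eq_zero_of_lt (by omega), Nat.cast_zero, zero_mul, mul_zero,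
          zero_mul, zero_mul]
    have hg : ∀ k : ℕ, 1 ≤ k → (γ₀ ^ (-(k:ℤ)) * (ρ:ℂ) ^ (-(k:ℤ))) • L ^ k = g k := by
      intro k hk
      rw [hw k, hexp k hk, smul_add, Finset.smul_sum, hgdef]
      congr 1
      refine Finset.sum_congr rfl fun i _ => ?_
      rw [Finset.smul_sum]
      refine Finset.sum_congr rfl fun m _ => ?_
      rw [smul_smul, hco]
    -- split off the k = 0 term
    have hsum : ∀ n, 1 ≤ n →
        ∑ k ∈ Finset.range n, (γ₀ ^ (-(k:ℤ)) * (ρ:ℂ) ^ (-(k:ℤ))) • L ^ k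
        = ((1 : B →L[ℂ] B) - g 0) + ∑ k ∈ Finset.range n, g k := by
      intro n hn
      have h1 : ∑ k ∈ Finset.range n,
          ((γ₀ ^ (-(k:ℤ)) * (ρ:ℂ) ^ (-(k:ℤ))) • L ^ k - g k) = (1 : B →L[ℂ] B) - g 0 := by
        rw [Finset.sum_eq_single_of_mem 0 (Finset.mem_range.2 (by omega))]
        · norm_num
        · intro k _ hk
          rw [hg k (by omega), sub_self]
      calc ∑ k ∈ Finset.range n, (γ₀ ^ (-(k:ℤ)) * (ρ:ℂ) ^ (-(k:ℤ))) • L ^ k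
          = ∑ k ∈ Finset.range n,
              (((γ₀ ^ (-(k:ℤ)) * (ρ:ℂ) ^ (-(k:ℤ))) • L ^ k - g k) + g k) := by
            refine Finset.sum_congr rfl fun k _ => ?_
            rw [sub_add_cancel]
        _ = _ := by rw [Finset.sum_add_distrib, h1]
    -- collapse the sum over k in the main part
    have hsum2 : ∀ n : ℕ,
        ∑ k ∈ Finset.range n, g k
        = (∑ i, ∑ m ∈ Finset.range κ,
            (∑ k ∈ Finset.range n, (k.choose m : ℂ) * (γ i / γ₀) ^ k) •
              ((((γ i * ρ) : ℂ)⁻¹) ^ m • (if m = 0 then S i else N i ^ m)))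
          + ∑ k ∈ Finset.range n, ((γ₀⁻¹ * (ρ:ℂ)⁻¹) ^ k) • R ^ k := by
      intro n
      rw [hgdef, Finset.sum_add_distrib]
      congr 1
      rw [Finset.sum_comm]
      refine Finset.sum_congr rfl fun i _ => ?_
      rw [Finset.sum_comm]
      refine Finset.sum_congr rfl fun m _ => ?_
      rw [Finset.sum_smul]
      refine Finset.sum_congr rfl fun k _ => ?_
      rw [smul_smul]
    -- the three tendsto pieces
    have hκneg : -(κ:ℤ) < 0 := by omega
    have hT1 : Tendsto (fun n : ℕ => (n:ℂ) ^ (-(κ:ℤ)) • ((1 : B →L[ℂ] B) - g 0))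
        atTop (𝓝 0) := by
      have h := (natCast_zpow_tendsto_zero _ hκneg).smul_const ((1 : B →L[ℂ] B) - g 0)
      rwa [zero_smul] at h
    have hT2 : Tendsto (fun n : ℕ => ∑ i, ∑ m ∈ Finset.range κ,
          ((n:ℂ) ^ (-(κ:ℤ)) * ∑ k ∈ Finset.range n, (k.choose m : ℂ) * (γ i / γ₀) ^ k) •
            ((((γ i * ρ) : ℂ)⁻¹) ^ m • (if m = 0 then S i else N i ^ m)))
        atTop
        (𝓝 (∑ i, ∑ m ∈ Finset.range κ,
          (if γ₀ = γ i ∧ m + 1 = κ then (κ.factorial : ℂ)⁻¹ else 0) •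
            ((((γ i * ρ) : ℂ)⁻¹) ^ m • (if m = 0 then S i else N i ^ m)))) := by
      refine tendsto_finset_sum _ fun i _ => tendsto_finset_sum _ fun m hm => ?_
      have hz : ‖γ i / γ₀‖ = 1 := by
        rw [norm_div, hγ i, hγ₀, div_one]
      have h := (sum_choose_mul_zpow_tendsto (γ i / γ₀) hz m κ (Finset.mem_range.1 hm)).smul_const
        ((((γ i * ρ) : ℂ)⁻¹) ^ m • (if m = 0 then S i else N i ^ m))
      have hcond : ((γ i / γ₀ = 1 ∧ m + 1 = κ)) = ((γ₀ = γ i ∧ m + 1 = κ)) := by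
        have h2 : (γ i / γ₀ = 1) = (γ₀ = γ i) := by
          rw [div_eq_one_iff_eq hγ₀0]
          exact propext ⟨fun h => h.symm, fun h => h.symm⟩
        rw [h2]
      simp only [hcond] at h
      exact h
    -- the remainder part
    have hT3 : Tendsto (fun n : ℕ => (n:ℂ) ^ (-(κ:ℤ)) •
        ∑ k ∈ Finset.range n, ((γ₀⁻¹ * (ρ:ℂ)⁻¹) ^ k) • R ^ k) atTop (𝓝 0) := by
      obtain ⟨c, hc1, hc2⟩ := exists_between hspec
      have hctop : c ≠ ⊤ := ne_top_of_lt hc2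
      set r : ℝ := c.toReal with hrdef
      have hr0 : 0 ≤ r := ENNReal.toReal_nonneg
      have hrρ : r < ρ := by
        have h := (ENNReal.toReal_lt_toReal hctop ENNReal.ofReal_ne_top).2 hc2
        rwa [ENNReal.toReal_ofReal hρ.le] at h
      have hev : ∀ᶠ k : ℕ in atTop, ‖R ^ k‖ ≤ r ^ k := by
        have h1 := (spectrum.pow_norm_pow_one_div_tendsto_nhds_spectralRadius R).eventually_lt_const hc1
        filter_upwards [h1, eventually_ge_atTop 1] with k hk hk1
        have hx0 : (0:ℝ) ≤ ‖R ^ k‖ ^ (1/(k:ℝ)) := Real.rpow_nonneg (norm_nonneg _) _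
        have hxr : ‖R ^ k‖ ^ (1/(k:ℝ)) < r :=
          (ENNReal.ofReal_lt_iff_lt_toReal hx0 hctop).1 hk
        have hkR : (‖R ^ k‖ ^ (1/(k:ℝ))) ^ (k:ℕ) = ‖R ^ k‖ := by
          rw [← Real.rpow_natCast (‖R ^ k‖ ^ (1/(k:ℝ))) k, ← Real.rpow_mul (norm_nonneg _),
            one_div, inv_mul_cancel₀ ((Nat.cast_ne_zero (R := ℝ)).2 (by omega)), Real.rpow_one]
        calc ‖R ^ k‖ = (‖R ^ k‖ ^ (1/(k:ℝ))) ^ (k:ℕ) := hkR.symm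
          _ ≤ r ^ k := pow_le_pow_left₀ hx0 hxr.le k
      have hu : Tendsto (fun k : ℕ => ‖((γ₀⁻¹ * (ρ:ℂ)⁻¹) ^ k) • R ^ k‖) atTop (𝓝 0) := by
        refine squeeze_zero' (Eventually.of_forall fun k => norm_nonneg _) ?_
          (tendsto_pow_atTop_nhds_zero_of_lt_one (by positivity) ((div_lt_one hρ).2 hrρ))
        filter_upwards [hev] with k hk
        rw [hns, norm_pow, norm_mul, norm_inv, norm_inv, hγ₀, inv_one, one_mul,
          Complex.norm_real, Real.norm_of_nonneg hρ.le]
        calc (ρ⁻¹) ^ k * ‖R ^ k‖ ≤ (ρ⁻¹) ^ k * r ^ k := by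
              refine mul_le_mul_of_nonneg_left hk (by positivity)
          _ = (r / ρ) ^ k := by rw [div_pow, inv_pow, div_eq_mul_inv, mul_comm]
      have hces : Tendsto (fun n : ℕ => (n:ℝ)⁻¹ *
          ∑ k ∈ Finset.range n, ‖((γ₀⁻¹ * (ρ:ℂ)⁻¹) ^ k) • R ^ k‖) atTop (𝓝 0) := by
        simpa using hu.cesaro
      refine squeeze_zero_norm' ?_ hces
      filter_upwards [eventually_ge_atTop 1] with n hn
      have hn1 : (1:ℝ) ≤ (n:ℝ) := by exact_mod_cast hn
      have hnz : (0:ℝ) ≤ ∑ k ∈ Finset.range n, ‖((γ₀⁻¹ * (ρ:ℂ)⁻¹) ^ k) • R ^ k‖ :=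
        Finset.sum_nonneg fun k _ => norm_nonneg _
      rw [hns, norm_zpow, Complex.norm_natCast]
      calc (n:ℝ) ^ (-(κ:ℤ)) * ‖∑ k ∈ Finset.range n, ((γ₀⁻¹ * (ρ:ℂ)⁻¹) ^ k) • R ^ k‖
          ≤ (n:ℝ) ^ (-(κ:ℤ)) * ∑ k ∈ Finset.range n, ‖((γ₀⁻¹ * (ρ:ℂ)⁻¹) ^ k) • R ^ k‖ := by
            refine mul_le_mul_of_nonneg_left (norm_sum_le _ _) ?_
            positivity
        _ ≤ (n:ℝ)⁻¹ * ∑ k ∈ Finset.range n, ‖((γ₀⁻¹ * (ρ:ℂ)⁻¹) ^ k) • R ^ k‖ := by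
            refine mul_le_mul_of_nonneg_right ?_ hnz
            have h := zpow_le_zpow_right₀ hn1 (by omega : -(κ:ℤ) ≤ -1)
            rwa [zpow_neg_one] at h
      -- done
    -- assemble
    have hfinal := hT1.add (hT2.add hT3)
    rw [zero_add, add_zero] at hfinal
    refine hfinal.congr' ?_
    filter_upwards [eventually_ge_atTop 1] with n hn
    rw [hsum n hn, hsum2 n, smul_add, smul_add]
    congr 1
    congr 1
    rw [Finset.smul_sum]
    refine Finset.sum_congr rfl fun i _ => ?_
    rw [Finset.smul_sum]
    refine Finset.sum_congr rfl fun m _ => ?_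
    rw [smul_smul, smul_smul, smul_smul, mul_assoc]
  constructor
  · intro hne
    have h0 : (∑ i, ∑ m ∈ Finset.range κ,
        (if γ₀ = γ i ∧ m + 1 = κ then (κ.factorial : ℂ)⁻¹ else 0) •
          ((((γ i * ρ) : ℂ)⁻¹) ^ m • (if m = 0 then S i else N i ^ m))) = 0 := by
      refine Finset.sum_eq_zero fun i _ => Finset.sum_eq_zero fun m _ => ?_
      rw [if_neg (fun h => hne i h.1), zero_smul]
    rwa [h0] at hmain
  · intro i hi
    have h0 : (∑ i, ∑ m ∈ Finset.range κ,
        (if γ₀ = γ i ∧ m + 1 = κ then (κ.factorial : ℂ)⁻¹ else 0) •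
          ((((γ i * ρ) : ℂ)⁻¹) ^ m • (if m = 0 then S i else N i ^ m)))
        = (κ.factorial : ℂ)⁻¹ •
            ((γ i * (ρ : ℂ)) ^ ((1 : ℤ) - (κ : ℤ)) •
              (if κ = 1 then S i else N i ^ (κ - 1))) := by
      rw [Finset.sum_eq_single i]
      · rw [Finset.sum_eq_single (κ - 1)]
        · have hcond : γ₀ = γ i ∧ (κ - 1) + 1 = κ := ⟨hi, by omega⟩
          rw [if_pos hcond]
          congr 1
          have hzpow : (((γ i * ρ) : ℂ)⁻¹) ^ (κ - 1) = (γ i * (ρ:ℂ)) ^ ((1 : ℤ) - (κ : ℤ)) := by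
            have h1 : (1 : ℤ) - (κ : ℤ) = -((κ - 1 : ℕ) : ℤ) := by
              push_cast [Nat.cast_sub hκ]; ring
            rw [h1, zpow_neg, zpow_natCast, inv_pow]
          rw [hzpow]
          congr 1
          by_cases h1 : κ = 1
          · simp [h1]
          · have h2 : ¬ (κ - 1 = 0) := by omega
            simp [h1, h2]
        · intro m _ hm
          rw [if_neg (fun h => hm (by omega)), zero_smul]
        · intro h
          exact absurd (Finset.mem_range.2 (by omega)) h
      · intro j _ hj
        refine Finset.sum_eq_zero fun m _ => ?_
        have : ¬ (γ₀ = γ j ∧ m + 1 = κ) := by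
          rintro ⟨h1, _⟩
          exact hj (hinj (hi ▸ h1.symm ▸ rfl)).symm
        rw [if_neg this, zero_smul]
      · intro h
        exact absurd (Finset.mem_univ i) h
    rwa [h0] at hmain
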